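/- Fix an integer d ≥ 2 and a constant C ≥ 1. There exist K ≥ 1 and ε_0 > 0 such that for every ε ∈ (0,ε_0) there exists δ_0 > 0 with the following property for all δ ∈ (0,δ_0). Let E ⊆ B(0,1) ⊆ ℝ^d be measurable with vol(E) ≤ C·δ^{d/2−ε}, and suppose that for every δ-tube T, every z ∈ ℝ^d and every ρ ∈ [δ,1] one has vol(E ∩ T ∩ B(z,ρ)) ≤ C·δ^{d−1/2−ε}·ρ^{1/2}. Let 𝒯 be a finite, pairwise δ-separated family of δ-tubes with vol(T ∩ E) ≥ δ^{d−1/2+ε} for every T ∈ 𝒯. Then for every point x ∈ ℝ^d, the number of tubes of 𝒯 containing x is at most δ^{−(d−1)/2 − Kε}. -/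

import Mathlib

open MeasureTheory Metric Set
open scoped ENNReal

noncomputable section

abbrev Euc (d : ℕ) : Type := EuclideanSpace ℝ (Fin d)

/-- The line through `a` with direction `v`. -/
def lineThrough {d : ℕ} (a v : Euc d) : Set (Euc d) :=
  Set.range fun t : ℝ => a + t • v

/-- The `ρ`-tube around the line through `a` with direction `v`: the closed
`ρ`-neighbourhood of the line. -/
def Tube {d : ℕ} (ρ : ℝ) (a v : Euc d) : Set (Euc d) :=
  {x | infDist x (lineThrough a v) ≤ ρ}


open scoped RealInnerProductSpace
set_option maxHeartbeats 1000000

namespace Bush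

lemma mem_lineThrough (a v : Euc d) (t : ℝ) : a + t • v ∈ lineThrough a v := ⟨t, rfl⟩

lemma self_mem_lineThrough (a v : Euc d) : a ∈ lineThrough a v := by
  simpa using mem_lineThrough a v 0

lemma lineThrough_smul (a : Euc d) {v : Euc d} {s : ℝ} (hs : s ≠ 0) :
    lineThrough a (s • v) = lineThrough a v := by
  ext z
  constructor
  · rintro ⟨t, rfl⟩; exact ⟨t * s, by dsimp only; rw [mul_smul]⟩
  · rintro ⟨t, rfl⟩; exact ⟨t / s, by dsimp only; rw [smul_smul, div_mul_cancel₀ _ hs]⟩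

lemma lineThrough_shift {a v b : Euc d} (hb : b ∈ lineThrough a v) :
    lineThrough b v = lineThrough a v := by
  obtain ⟨s, rfl⟩ := hb
  ext z
  constructor
  · rintro ⟨t, rfl⟩; exact ⟨s + t, by dsimp only; rw [add_smul]; abel⟩
  · rintro ⟨t, rfl⟩; exact ⟨t - s, by dsimp only; rw [sub_smul]; abel⟩

lemma lineThrough_pair {a v b c : Euc d} (hb : b ∈ lineThrough a v) (hc : c ∈ lineThrough a v)
    (hbc : b ≠ c) : lineThrough b (c - b) = lineThrough a v := by
  obtain ⟨s, hs⟩ := hb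
  obtain ⟨t, ht⟩ := hc
  have hcb : c - b = (t - s) • v := by rw [hs.symm, ht.symm, sub_smul]; dsimp only; abel
  have hts : t - s ≠ 0 := by
    intro h
    apply hbc
    rw [hs.symm, ht.symm, sub_eq_zero.1 h]
  have hb' : b ∈ lineThrough a v := ⟨s, hs⟩
  rw [hcb, lineThrough_smul _ hts, lineThrough_shift hb']

/-- The orthogonal projection of `z` onto the line through `a` with direction `u`. -/
def foot (z a u : Euc d) : Euc d := a + ⟪z - a, u⟫ • u

lemma foot_mem_lineThrough (z a u : Euc d) : foot z a u ∈ lineThrough a u :=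
  mem_lineThrough a u _

lemma foot_inner {z a u : Euc d} (hu : ‖u‖ = 1) : ⟪z - foot z a u, u⟫ = 0 := by
  have : z - foot z a u = (z - a) - ⟪z - a, u⟫ • u := by simp [foot]; abel
  rw [this, inner_sub_left, real_inner_smul_left, real_inner_self_eq_norm_sq, hu]
  ring

lemma dist_foot_le {z a u : Euc d} (hu : ‖u‖ = 1) (t : ℝ) :
    dist z (foot z a u) ≤ dist z (a + t • u) := by
  have h1 : z - (a + t • u) = (z - foot z a u) + ((⟪z - a, u⟫ - t) • u) := by
    simp [foot, sub_smul]; abel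
  have h2 : ⟪z - foot z a u, (⟪z - a, u⟫ - t) • u⟫ = 0 := by
    rw [real_inner_smul_right, foot_inner hu]; ring
  rw [dist_eq_norm, dist_eq_norm, h1]
  calc ‖z - foot z a u‖ ≤
      Real.sqrt (‖z - foot z a u‖ ^ 2 + ‖(⟪z - a, u⟫ - t) • u‖ ^ 2) := by
        rw [show ‖z - foot z a u‖ = Real.sqrt (‖z - foot z a u‖ ^ 2) by
          rw [Real.sqrt_sq (norm_nonneg _)]]
        apply Real.sqrt_le_sqrt
        nlinarith [sq_nonneg ‖(⟪z - a, u⟫ - t) • u‖, Real.sq_sqrt (sq_nonneg ‖z - foot z a u‖),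
          Real.sqrt_nonneg (‖z - foot z a u‖ ^ 2)]
    _ = ‖(z - foot z a u) + ((⟪z - a, u⟫ - t) • u)‖ := by
        rw [show ‖(z - foot z a u) + ((⟪z - a, u⟫ - t) • u)‖
            = Real.sqrt (‖(z - foot z a u) + ((⟪z - a, u⟫ - t) • u)‖ ^ 2) by
          rw [Real.sqrt_sq (norm_nonneg _)]]
        rw [norm_add_sq_real, h2]
        ring_nf

lemma infDist_eq_foot {z a u : Euc d} (hu : ‖u‖ = 1) :
    infDist z (lineThrough a u) = dist z (foot z a u) := by
  apply le_antisymm (infDist_le_dist_of_mem (foot_mem_lineThrough z a u))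
  by_contra h
  push_neg at h
  obtain ⟨y, hy, hlt⟩ := (infDist_lt_iff ⟨a, self_mem_lineThrough a u⟩).1 h
  obtain ⟨t, rfl⟩ := hy
  exact absurd hlt (not_lt.2 (dist_foot_le hu t))

lemma dist_foot_of_mem_tube {δ : ℝ} {x a v : Euc d} (hv : v ≠ 0) (hx : x ∈ Tube δ a v) :
    dist x (foot x a (‖v‖⁻¹ • v)) ≤ δ := by
  have hu : ‖‖v‖⁻¹ • v‖ = 1 := norm_smul_inv_norm hv
  have hl : lineThrough a v = lineThrough a (‖v‖⁻¹ • v) :=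
    (lineThrough_smul a (inv_ne_zero (norm_ne_zero_iff.2 hv))).symm
  have := hx
  simp only [Tube, mem_setOf_eq, hl, infDist_eq_foot hu] at this
  exact this

lemma line_point_mem_ball {a u : Euc d} (hu : ‖u‖ = 1) (hau : ⟪a, u⟫ = 0) (t : ℝ) :
    a + t • u ∈ closedBall (0 : Euc d) 2 ↔ t ^ 2 ≤ 4 - ‖a‖ ^ 2 := by
  have hn : ‖a + t • u‖ ^ 2 = ‖a‖ ^ 2 + t ^ 2 := by
    rw [norm_add_sq_real, real_inner_smul_right, hau, norm_smul, Real.norm_eq_abs, hu]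
    ring_nf
    rw [sq_abs]
  rw [mem_closedBall, dist_zero_right]
  constructor
  · intro h; nlinarith [norm_nonneg (a + t • u)]
  · intro h; nlinarith [norm_nonneg (a + t • u), norm_nonneg a]

lemma seg_onesided {a a' u u' : Euc d} (hu : ‖u‖ = 1) (hu' : ‖u'‖ = 1)
    (hau : ⟪a, u⟫ = 0) (hau' : ⟪a', u'⟫ = 0) (ha : ‖a‖ ≤ 3/2) (ha' : ‖a'‖ ≤ 3/2) :
    ∀ x ∈ lineThrough a u ∩ closedBall (0 : Euc d) 2,
      ∃ y ∈ lineThrough a' u' ∩ closedBall (0 : Euc d) 2,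
        dist x y ≤ 4 * ‖a - a'‖ + 2 * ‖u - u'‖ := by
  rintro x ⟨⟨t, rfl⟩, hx2⟩
  dsimp only at hx2 ⊢
  set r : ℝ := Real.sqrt (4 - ‖a‖ ^ 2) with hrdef
  set r' : ℝ := Real.sqrt (4 - ‖a'‖ ^ 2) with hr'def
  have h4a : (1 : ℝ) ≤ 4 - ‖a‖ ^ 2 := by nlinarith [norm_nonneg a]
  have h4a' : (1 : ℝ) ≤ 4 - ‖a'‖ ^ 2 := by nlinarith [norm_nonneg a']
  have hr1 : 1 ≤ r := Real.one_le_sqrt.2 h4a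
  have hr'1 : 1 ≤ r' := Real.one_le_sqrt.2 h4a'
  have hr2 : r ^ 2 = 4 - ‖a‖ ^ 2 := Real.sq_sqrt (by linarith)
  have hr'2 : r' ^ 2 = 4 - ‖a'‖ ^ 2 := Real.sq_sqrt (by linarith)
  have hr'le : r' ≤ 2 := by nlinarith
  have ht : t ^ 2 ≤ 4 - ‖a‖ ^ 2 := (line_point_mem_ball hu hau t).1 hx2
  have htr : |t| ≤ r := by
    rw [← Real.sqrt_sq_eq_abs, hrdef]
    exact Real.sqrt_le_sqrt (by linarith)
  have htr' : -r ≤ t ∧ t ≤ r := abs_le.1 htr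
  set t' : ℝ := max (-r') (min r' t) with ht'def
  have ht'r : -r' ≤ t' ∧ t' ≤ r' := by
    constructor
    · exact le_max_left _ _
    · exact max_le (by linarith) (min_le_left _ _)
  have hy2 : a' + t' • u' ∈ closedBall (0 : Euc d) 2 := by
    rw [line_point_mem_ball hu' hau' t']
    nlinarith [ht'r.1, ht'r.2]
  refine ⟨a' + t' • u', ⟨⟨t', rfl⟩, hy2⟩, ?_⟩
  have hprod : ‖a'‖ ^ 2 - ‖a‖ ^ 2 ≤ 3 * ‖a - a'‖ := by
    have hna : |‖a‖ - ‖a'‖| ≤ ‖a - a'‖ := abs_norm_sub_norm_le a a'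
    rw [abs_le] at hna
    nlinarith [norm_nonneg a, norm_nonneg a']
  have hrr' : r ≤ r' ∨ r - r' ≤ 3 * ‖a - a'‖ := by
    rcases le_or_gt r r' with h | h
    · exact Or.inl h
    · right
      nlinarith
  have htt' : |t - t'| ≤ 3 * ‖a - a'‖ := by
    have hbnd : 0 ≤ 3 * ‖a - a'‖ := by positivity
    rcases le_total t r' with h1 | h1
    · rcases le_total (-r') t with h2 | h2
      · have : t' = t := by
          rw [ht'def, min_eq_right h1, max_eq_right h2]
        rw [this]; simp only [sub_self, abs_zero]; exact hbnd
      · have : t' = -r' := by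
          rw [ht'def, min_eq_right h1, max_eq_left h2]
        rw [this]
        rw [abs_le]
        rcases hrr' with h3 | h3
        · constructor <;> linarith [htr'.1, htr'.2]
        · constructor <;> linarith [htr'.1, htr'.2]
    · have : t' = r' := by
        rw [ht'def, min_eq_left h1, max_eq_right (by linarith : -r' ≤ r')]
      rw [this]
      rw [abs_le]
      rcases hrr' with h3 | h3
      · constructor <;> linarith [htr'.1, htr'.2]
      · constructor <;> linarith [htr'.1, htr'.2]
  have hid : (a + t • u) - (a' + t' • u') = (a - a') + ((t - t') • u + t' • (u - u')) := by
    rw [sub_smul, smul_sub]; abel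
  rw [dist_eq_norm, hid]
  have hb1 : ‖(t - t') • u + t' • (u - u')‖ ≤ ‖(t - t') • u‖ + ‖t' • (u - u')‖ := norm_add_le _ _
  have hb2 : ‖(t - t') • u‖ = |t - t'| := by rw [norm_smul, Real.norm_eq_abs, hu, mul_one]
  have hb3 : ‖t' • (u - u')‖ ≤ 2 * ‖u - u'‖ := by
    rw [norm_smul, Real.norm_eq_abs]
    have : |t'| ≤ 2 := by rw [abs_le]; constructor <;> nlinarith [ht'r.1, ht'r.2]
    nlinarith [norm_nonneg (u - u')]
  calc ‖(a - a') + ((t - t') • u + t' • (u - u'))‖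
      ≤ ‖a - a'‖ + ‖(t - t') • u + t' • (u - u')‖ := norm_add_le _ _
    _ ≤ ‖a - a'‖ + (|t - t'| + 2 * ‖u - u'‖) := by rw [hb2] at hb1; linarith [hb1, hb3]
    _ ≤ 4 * ‖a - a'‖ + 2 * ‖u - u'‖ := by linarith [htt']

/-- Perpendicular anchor of a line: properties. -/
lemma perp_anchor {b u : Euc d} (hu : ‖u‖ = 1) (hb : ‖b‖ ≤ 3/2) :
    lineThrough (foot 0 b u) u = lineThrough b u ∧ ⟪foot 0 b u, u⟫ = 0 ∧
      ‖foot 0 b u‖ ≤ 3/2 ∧ foot 0 b u = b - ⟪b, u⟫ • u := by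
  have hf : foot 0 b u = b - ⟪b, u⟫ • u := by
    rw [foot, zero_sub, inner_neg_left, neg_smul, ← sub_eq_add_neg]
  refine ⟨?_, ?_, ?_, hf⟩
  · apply lineThrough_shift
    rw [hf]
    exact ⟨-⟪b, u⟫, by dsimp only; rw [neg_smul, ← sub_eq_add_neg]⟩
  · have := foot_inner (z := (0 : Euc d)) (a := b) (u := u) hu
    rw [zero_sub, inner_neg_left] at this
    linarith [this]
  · have h := dist_foot_le (z := (0 : Euc d)) (a := b) (u := u) hu 0
    simp only [smul_zero, zero_smul, add_zero, dist_zero_left] at h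
    calc ‖foot 0 b u‖ = ‖(0 : Euc d) - foot 0 b u‖ := by rw [zero_sub, norm_neg]
      _ ≤ ‖b‖ := by
          rw [← dist_eq_norm] at *
          simpa [dist_comm] using h
      _ ≤ 3/2 := hb

lemma anchor_diff {b b' u u' : Euc d} (hu : ‖u‖ = 1) (hu' : ‖u'‖ = 1)
    (hb : ‖b‖ ≤ 3/2) (hb' : ‖b'‖ ≤ 3/2) :
    ‖foot 0 b u - foot 0 b' u'‖ ≤ 2 * ‖b - b'‖ + 3 * ‖u - u'‖ := by
  obtain ⟨-, -, -, hf⟩ := perp_anchor hu hb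
  obtain ⟨-, -, -, hf'⟩ := perp_anchor hu' hb'
  rw [hf, hf']
  have hid : (b - ⟪b, u⟫ • u) - (b' - ⟪b', u'⟫ • u')
      = (b - b') - ((⟪b, u⟫ - ⟪b', u'⟫) • u + ⟪b', u'⟫ • (u - u')) := by
    rw [sub_smul, smul_sub]; abel
  rw [hid]
  have h1 : |⟪b, u⟫ - ⟪b', u'⟫| ≤ ‖b - b'‖ + (3/2) * ‖u - u'‖ := by
    have e : ⟪b, u⟫ - ⟪b', u'⟫ = ⟪b - b', u⟫ + ⟪b', u - u'⟫ := by
      rw [inner_sub_left, inner_sub_right]; ring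
    rw [e]
    calc |⟪b - b', u⟫ + ⟪b', u - u'⟫| ≤ |⟪b - b', u⟫| + |⟪b', u - u'⟫| := abs_add_le _ _
      _ ≤ ‖b - b'‖ * ‖u‖ + ‖b'‖ * ‖u - u'‖ := by
          gcongr <;> exact abs_real_inner_le_norm _ _
      _ ≤ ‖b - b'‖ + (3/2) * ‖u - u'‖ := by
          rw [hu, mul_one]
          gcongr
  have h2 : |⟪b', u'⟫| ≤ 3/2 := by
    calc |⟪b', u'⟫| ≤ ‖b'‖ * ‖u'‖ := abs_real_inner_le_norm _ _
      _ ≤ 3/2 := by rw [hu', mul_one]; exact hb'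
  calc ‖(b - b') - ((⟪b, u⟫ - ⟪b', u'⟫) • u + ⟪b', u'⟫ • (u - u'))‖
      ≤ ‖b - b'‖ + ‖(⟪b, u⟫ - ⟪b', u'⟫) • u + ⟪b', u'⟫ • (u - u')‖ := norm_sub_le _ _
    _ ≤ ‖b - b'‖ + (‖(⟪b, u⟫ - ⟪b', u'⟫) • u‖ + ‖⟪b', u'⟫ • (u - u')‖) := by
        gcongr; exact norm_add_le _ _
    _ ≤ 2 * ‖b - b'‖ + 3 * ‖u - u'‖ := by
        rw [norm_smul, norm_smul, Real.norm_eq_abs, Real.norm_eq_abs, hu, mul_one]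
        have := h2
        nlinarith [norm_nonneg (u - u'), abs_nonneg ⟪b', u'⟫, h1, h2]

lemma haus_le {b b' u u' : Euc d} (hu : ‖u‖ = 1) (hu' : ‖u'‖ = 1)
    (hb : ‖b‖ ≤ 3/2) (hb' : ‖b'‖ ≤ 3/2) :
    hausdorffDist (lineThrough b u ∩ closedBall (0 : Euc d) 2)
      (lineThrough b' u' ∩ closedBall (0 : Euc d) 2) ≤ 20 * (‖b - b'‖ + ‖u - u'‖) := by
  obtain ⟨hl, hp, hn, -⟩ := perp_anchor hu hb
  obtain ⟨hl', hp', hn', -⟩ := perp_anchor hu' hb'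
  have hd : ‖foot 0 b u - foot 0 b' u'‖ ≤ 2 * ‖b - b'‖ + 3 * ‖u - u'‖ := anchor_diff hu hu' hb hb'
  have hd' : ‖foot 0 b' u' - foot 0 b u‖ ≤ 2 * ‖b - b'‖ + 3 * ‖u - u'‖ := by
    rw [← norm_neg]; simpa [neg_sub] using hd
  have hkey : (4 : ℝ) * ‖foot 0 b u - foot 0 b' u'‖ + 2 * ‖u - u'‖
      ≤ 20 * (‖b - b'‖ + ‖u - u'‖) := by
    nlinarith [norm_nonneg (b - b'), norm_nonneg (u - u')]
  apply hausdorffDist_le_of_mem_dist (by positivity)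
  · intro x hx
    rw [← hl] at hx
    obtain ⟨y, hy, hxy⟩ := seg_onesided hu hu' hp hp' hn hn' x hx
    rw [hl'] at hy
    exact ⟨y, hy, by linarith⟩
  · intro y hy
    rw [← hl'] at hy
    obtain ⟨x, hx, hyx⟩ := seg_onesided hu' hu hp' hp hn' hn y hy
    rw [hl] at hx
    refine ⟨x, hx, ?_⟩
    have hsym : dist y x = dist x y := dist_comm y x
    have : ‖u' - u‖ = ‖u - u'‖ := by rw [← norm_neg, neg_sub]
    rw [this] at hyx
    linarith [hd', hyx, norm_nonneg (b - b'), norm_nonneg (u - u')]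

/-- Volume-packing bound: an `s`-separated finite set inside a closed ball of radius `r`
in a finite-dimensional normed space has at most `(2r/s+1)^dim` elements. -/
lemma packing_card {E : Type*} [NormedAddCommGroup E] [NormedSpace ℝ E]
    [MeasurableSpace E] [BorelSpace E] [FiniteDimensional ℝ E] [Nontrivial E]
    (μ : Measure E) [μ.IsAddHaarMeasure] {s r : ℝ} (hs : 0 < s) (hr : 0 ≤ r)
    (c : E) (S : Finset E)
    (hS : ∀ p ∈ S, p ∈ closedBall c r)
    (hsep : ∀ p ∈ S, ∀ q ∈ S, p ≠ q → s ≤ dist p q) :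
    (S.card : ℝ) ≤ (2 * r / s + 1) ^ (Module.finrank ℝ E) := by
  have hdisj : (S : Set E).PairwiseDisjoint (fun p => ball p (s / 2)) := by
    intro p hp q hq hpq
    apply ball_disjoint_ball
    rw [dist_comm] at *
    calc s / 2 + s / 2 = s := by ring
      _ ≤ dist q p := by rw [dist_comm]; exact hsep p hp q hq hpq
  have hsub : ∀ p ∈ S, ball p (s / 2) ⊆ ball c (r + s / 2) := by
    intro p hp z hz
    rw [mem_ball] at hz ⊢
    have := mem_closedBall.1 (hS p hp)
    calc dist z c ≤ dist z p + dist p c := dist_triangle _ _ _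
      _ < s / 2 + r := by linarith
      _ = r + s / 2 := by ring
  have hmeas : ∀ p ∈ S, MeasurableSet (ball p (s / 2)) := fun p _ => measurableSet_ball
  have hunion : μ (⋃ p ∈ S, ball p (s / 2)) = ∑ p ∈ S, μ (ball p (s / 2)) :=
    measure_biUnion_finset hdisj hmeas
  have hle : ∑ p ∈ S, μ (ball p (s / 2)) ≤ μ (ball c (r + s / 2)) := by
    rw [← hunion]
    exact measure_mono (Set.iUnion₂_subset hsub)
  have hball : ∀ p : E, μ (ball p (s / 2))
      = ENNReal.ofReal ((s / 2) ^ Module.finrank ℝ E) * μ (ball 0 1) :=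
    fun p => Measure.addHaar_ball μ p (by linarith)
  have hballc : μ (ball c (r + s / 2))
      = ENNReal.ofReal ((r + s / 2) ^ Module.finrank ℝ E) * μ (ball 0 1) :=
    Measure.addHaar_ball μ c (by linarith)
  simp only [hball, Finset.sum_const, nsmul_eq_mul] at hle
  rw [hballc] at hle
  have hμpos : 0 < μ (ball (0 : E) 1) := measure_ball_pos μ 0 one_pos
  have hμfin : μ (ball (0 : E) 1) < ⊤ := measure_ball_lt_top
  -- cancel μ (ball 0 1)
  rw [← mul_assoc] at hle
  have hcard : (S.card : ℝ≥0∞) * ENNReal.ofReal ((s / 2) ^ Module.finrank ℝ E)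
      ≤ ENNReal.ofReal ((r + s / 2) ^ Module.finrank ℝ E) :=
    (ENNReal.mul_le_mul_iff_left hμpos.ne' hμfin.ne).1 hle
  -- to reals
  have hsp : (0:ℝ) < (s / 2) ^ Module.finrank ℝ E := by positivity
  have h1 : (S.card : ℝ) * ((s / 2) ^ Module.finrank ℝ E) ≤ (r + s / 2) ^ Module.finrank ℝ E := by
    have := ENNReal.toReal_mono (by exact ENNReal.ofReal_ne_top) hcard
    rw [ENNReal.toReal_mul, ENNReal.toReal_ofReal hsp.le, ENNReal.toReal_ofReal (by positivity),
      ENNReal.toReal_natCast] at this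
    exact this
  have h2 : ((2 * r / s + 1) : ℝ) ^ Module.finrank ℝ E
      = ((r + s / 2) ^ Module.finrank ℝ E) / ((s / 2) ^ Module.finrank ℝ E) := by
    rw [← div_pow]
    congr 1
    field_simp
  rw [h2, le_div_iff₀ hsp]
  exact h1

lemma normalize_sub {v v' : Euc d} (hv : v ≠ 0) (hv' : v' ≠ 0) :
    ‖‖v‖⁻¹ • v - ‖v'‖⁻¹ • v'‖ ≤ 2 * ‖v - v'‖ / ‖v‖ := by
  have hnv : (0:ℝ) < ‖v‖ := norm_pos_iff.2 hv
  have hnv' : (0:ℝ) < ‖v'‖ := norm_pos_iff.2 hv'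
  have h1 : ‖v‖⁻¹ • v - ‖v'‖⁻¹ • v' = ‖v‖⁻¹ • (v - v') + (‖v‖⁻¹ - ‖v'‖⁻¹) • v' := by
    rw [smul_sub, sub_smul]; abel
  rw [h1]
  have h2 : ‖(‖v‖⁻¹ - ‖v'‖⁻¹) • v'‖ ≤ ‖v - v'‖ / ‖v‖ := by
    rw [norm_smul, Real.norm_eq_abs]
    have e : ‖v‖⁻¹ - ‖v'‖⁻¹ = (‖v'‖ - ‖v‖) * (‖v‖⁻¹ * ‖v'‖⁻¹) := by field_simp
    rw [e, abs_mul, abs_of_pos (by positivity : (0:ℝ) < ‖v‖⁻¹ * ‖v'‖⁻¹)]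
    have h3 : |‖v'‖ - ‖v‖| ≤ ‖v - v'‖ := by
      rw [← norm_neg (v - v'), neg_sub]
      exact abs_norm_sub_norm_le v' v
    calc |‖v'‖ - ‖v‖| * (‖v‖⁻¹ * ‖v'‖⁻¹) * ‖v'‖ = |‖v'‖ - ‖v‖| / ‖v‖ := by field_simp
      _ ≤ ‖v - v'‖ / ‖v‖ := by gcongr
  calc ‖‖v‖⁻¹ • (v - v') + (‖v‖⁻¹ - ‖v'‖⁻¹) • v'‖
      ≤ ‖‖v‖⁻¹ • (v - v')‖ + ‖(‖v‖⁻¹ - ‖v'‖⁻¹) • v'‖ := norm_add_le _ _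
    _ ≤ ‖v - v'‖ / ‖v‖ + ‖v - v'‖ / ‖v‖ := by
        apply add_le_add _ h2
        rw [norm_smul, Real.norm_eq_abs, abs_of_pos (by positivity : (0:ℝ) < ‖v‖⁻¹)]
        rw [div_eq_inv_mul]
    _ = 2 * ‖v - v'‖ / ‖v‖ := by ring

lemma overlap_count (hd : 2 ≤ d) (δ ρ : ℝ) (x y : Euc d)
    [DecidablePred fun p : Euc d × Euc d => x ∈ Tube δ p.1 p.2 ∧ y ∈ Tube δ p.1 p.2]
    [DecidableEq (Euc d × Euc d)]
    (𝒯 : Finset (Euc d × Euc d))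
    (hδ : 0 < δ) (hρ1 : ρ ≤ 1) (h4δ : 4 * δ ≤ ρ)
    (hy1 : y ∈ closedBall (0 : Euc d) 1) (hxy : ρ ≤ dist y x)
    (hv : ∀ p ∈ 𝒯, p.2 ≠ 0)
    (hsep : ∀ p ∈ 𝒯, ∀ q ∈ 𝒯, p ≠ q →
      δ ≤ hausdorffDist (lineThrough p.1 p.2 ∩ closedBall (0 : Euc d) 2)
            (lineThrough q.1 q.2 ∩ closedBall (0 : Euc d) 2)) :
    (((𝒯.filter (fun p : Euc d × Euc d => x ∈ Tube δ p.1 p.2 ∧ y ∈ Tube δ p.1 p.2)).card : ℝ))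
      ≤ (640 / ρ + 1) ^ (2 * d) := by
  have hρ : (0:ℝ) < ρ := by linarith
  set S := 𝒯.filter (fun p : Euc d × Euc d => x ∈ Tube δ p.1 p.2 ∧ y ∈ Tube δ p.1 p.2) with hS
  -- data maps
  set X : Euc d × Euc d → Euc d := fun p => foot x p.1 (‖p.2‖⁻¹ • p.2) with hX
  set Y : Euc d × Euc d → Euc d := fun p => foot y p.1 (‖p.2‖⁻¹ • p.2) with hY
  set U : Euc d × Euc d → Euc d := fun p => ‖X p - Y p‖⁻¹ • (X p - Y p) with hU
  set f : Euc d × Euc d → Euc d × Euc d := fun p => (Y p, U p) with hf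
  have hxyn : x - y ≠ 0 := by
    intro h
    rw [sub_eq_zero] at h
    rw [h] at hxy
    simp at hxy
    linarith
  set w : Euc d := ‖x - y‖⁻¹ • (x - y) with hw
  -- basic facts for members of S
  have key : ∀ p ∈ S, dist x (X p) ≤ δ ∧ dist y (Y p) ≤ δ ∧ ρ / 2 ≤ ‖X p - Y p‖ ∧
      lineThrough (Y p) (U p) = lineThrough p.1 p.2 ∧ ‖U p‖ = 1 ∧ ‖Y p‖ ≤ 3/2 ∧
      dist (U p) w ≤ 8 * δ / ρ := by
    intro p hp
    rw [hS, Finset.mem_filter] at hp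
    obtain ⟨hpT, hpx, hpy⟩ := hp
    have hp2 : p.2 ≠ 0 := hv p hpT
    have hdx : dist x (X p) ≤ δ := dist_foot_of_mem_tube hp2 hpx
    have hdy : dist y (Y p) ≤ δ := dist_foot_of_mem_tube hp2 hpy
    have hdistxy : ρ ≤ dist x y := by rw [dist_comm]; exact hxy
    have hXY : ρ / 2 ≤ ‖X p - Y p‖ := by
      have h1 : dist x y ≤ dist x (X p) + dist (X p) (Y p) + dist (Y p) y :=
        dist_triangle4 x (X p) (Y p) y
      rw [show dist (X p) (Y p) = ‖X p - Y p‖ from dist_eq_norm _ _] at h1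
      rw [dist_comm] at hdy
      linarith [h1, hdx, hdy, h4δ, hdistxy]
    have hXYne : X p - Y p ≠ 0 := by
      intro h
      rw [h, norm_zero] at hXY
      linarith
    have hXYne' : X p ≠ Y p := sub_ne_zero.1 hXYne
    have hup : ‖U p‖ = 1 := by
      rw [hU]
      exact norm_smul_inv_norm hXYne
    have hlp : lineThrough p.1 p.2 = lineThrough p.1 (‖p.2‖⁻¹ • p.2) :=
      (lineThrough_smul p.1 (inv_ne_zero (norm_ne_zero_iff.2 hp2))).symm
    have hline : lineThrough (Y p) (U p) = lineThrough p.1 p.2 := by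
      rw [hU]
      have h1 : lineThrough (Y p) (‖X p - Y p‖⁻¹ • (X p - Y p)) = lineThrough (Y p) (X p - Y p) :=
        lineThrough_smul (Y p) (inv_ne_zero (norm_ne_zero_iff.2 hXYne))
      rw [h1, hlp]
      exact lineThrough_pair (foot_mem_lineThrough y p.1 _) (foot_mem_lineThrough x p.1 _)
        (Ne.symm hXYne')
    have hYn : ‖Y p‖ ≤ 3/2 := by
      have : dist y 0 ≤ 1 := mem_closedBall.1 hy1
      rw [dist_zero_right] at this
      have h2 : ‖Y p‖ ≤ ‖y‖ + dist y (Y p) := by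
        rw [dist_eq_norm]
        calc ‖Y p‖ = ‖y - (y - Y p)‖ := by congr 1; abel
          _ ≤ ‖y‖ + ‖y - Y p‖ := norm_sub_le _ _
      have hδ4 : δ ≤ 1/4 := by linarith
      linarith
    have hUw : dist (U p) w ≤ 8 * δ / ρ := by
      have h0 : dist (U p) w = ‖‖X p - Y p‖⁻¹ • (X p - Y p) - ‖x - y‖⁻¹ • (x - y)‖ := by
        rw [hU, hw, dist_eq_norm]
      rw [h0]
      have h1 : ‖(X p - Y p) - (x - y)‖ ≤ 2 * δ := by
        have e : (X p - Y p) - (x - y) = (X p - x) - (Y p - y) := by abel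
        rw [e]
        calc ‖(X p - x) - (Y p - y)‖ ≤ ‖X p - x‖ + ‖Y p - y‖ := norm_sub_le _ _
          _ ≤ δ + δ := by
              apply add_le_add
              · rw [← dist_eq_norm, dist_comm]; exact hdx
              · rw [← dist_eq_norm, dist_comm]; exact hdy
          _ = 2 * δ := by ring
      calc ‖‖X p - Y p‖⁻¹ • (X p - Y p) - ‖x - y‖⁻¹ • (x - y)‖
          ≤ 2 * ‖(X p - Y p) - (x - y)‖ / ‖X p - Y p‖ := normalize_sub hXYne hxyn
        _ ≤ 2 * (2 * δ) / (ρ / 2) := by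
            apply div_le_div₀ (by positivity) (by linarith) (by linarith) hXY
        _ = 8 * δ / ρ := by field_simp; ring
    exact ⟨hdx, hdy, hXY, hline, hup, hYn, hUw⟩
  -- injectivity and separation of f on S
  have hsepf : ∀ p ∈ S, ∀ q ∈ S, p ≠ q → δ / 40 ≤ dist (f p) (f q) := by
    intro p hp q hq hpq
    obtain ⟨-, -, -, hlp, hup, hYp, -⟩ := key p hp
    obtain ⟨-, -, -, hlq, huq, hYq, -⟩ := key q hq
    have hpT : p ∈ 𝒯 := Finset.mem_of_mem_filter p hp
    have hqT : q ∈ 𝒯 := Finset.mem_of_mem_filter q hq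
    have h1 : δ ≤ hausdorffDist (lineThrough p.1 p.2 ∩ closedBall (0 : Euc d) 2)
        (lineThrough q.1 q.2 ∩ closedBall (0 : Euc d) 2) := hsep p hpT q hqT hpq
    rw [← hlp, ← hlq] at h1
    have h2 := haus_le hup huq hYp hYq
    have h3 : δ ≤ 20 * (‖Y p - Y q‖ + ‖U p - U q‖) := le_trans h1 h2
    have h4 : ‖Y p - Y q‖ ≤ dist (f p) (f q) := by
      rw [hf, Prod.dist_eq]
      dsimp only
      rw [← dist_eq_norm]
      exact le_max_left _ _
    have h5 : ‖U p - U q‖ ≤ dist (f p) (f q) := by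
      rw [hf, Prod.dist_eq]
      dsimp only
      rw [← dist_eq_norm]
      exact le_max_right _ _
    linarith
  have hinj : Set.InjOn f S := by
    intro p hp q hq hpq
    by_contra h
    have := hsepf p hp q hq h
    rw [hpq] at this
    simp only [dist_self] at this
    linarith
  -- membership in a ball
  have hmem : ∀ z ∈ S.image f, z ∈ closedBall ((y, w) : Euc d × Euc d) (8 * δ / ρ) := by
    intro z hz
    rw [Finset.mem_image] at hz
    obtain ⟨p, hp, rfl⟩ := hz
    obtain ⟨-, hdy, -, -, -, -, hUw⟩ := key p hp
    rw [mem_closedBall, hf, Prod.dist_eq]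
    dsimp only
    apply max_le
    · rw [dist_comm] at hdy
      calc dist (Y p) y ≤ δ := hdy
        _ ≤ 8 * δ / ρ := by
            rw [le_div_iff₀ hρ]
            nlinarith
    · exact hUw
  -- instances for packing in the product space
  haveI : Nonempty (Fin d) := Fin.pos_iff_nonempty.1 (by omega)
  haveI hHaar : (volume : Measure (Euc d × Euc d)).IsAddHaarMeasure := by
    rw [Measure.volume_eq_prod (Euc d) (Euc d)]
    exact Measure.prod.instIsAddHaarMeasure _ _
  have hpack := packing_card (volume : Measure (Euc d × Euc d))
    (by positivity : (0:ℝ) < δ / 40) (by positivity : (0:ℝ) ≤ 8 * δ / ρ)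
    ((y, w) : Euc d × Euc d) (S.image f) hmem ?_
  · have hcardeq : (S.image f).card = S.card := Finset.card_image_of_injOn hinj
    rw [hcardeq] at hpack
    have hrank : Module.finrank ℝ (Euc d × Euc d) = 2 * d := by
      rw [Module.finrank_prod, finrank_euclideanSpace_fin]
      ring
    rw [hrank] at hpack
    have harith : 2 * (8 * δ / ρ) / (δ / 40) + 1 = 640 / ρ + 1 := by
      field_simp
      ring
    rw [harith] at hpack
    exact hpack
  · intro z hz z' hz' hzz'
    rw [Finset.mem_image] at hz hz'
    obtain ⟨p, hp, rfl⟩ := hz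
    obtain ⟨q, hq, rfl⟩ := hz'
    have hpq : p ≠ q := by
      intro h
      rw [h] at hzz'
      exact hzz' rfl
    exact hsepf p hp q hq hpq

lemma tube_measurable (δ : ℝ) (a v : Euc d) : MeasurableSet (Tube δ a v) := by
  have : IsClosed (Tube δ a v) :=
    isClosed_le (continuous_infDist_pt (lineThrough a v)) continuous_const
  exact this.measurableSet

end Bush

open Bush

/-- **Bush bound (inequality (2.2)).** No point lies in too many tubes of the family. -/
theorem bush_bound (d : ℕ) (hd : 2 ≤ d) (C : ℝ) (hC : 1 ≤ C) :
    ∃ K : ℝ, 1 ≤ K ∧ ∃ ε₀ : ℝ, 0 < ε₀ ∧ ∀ ε : ℝ, 0 < ε → ε < ε₀ →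
      ∃ δ₀ : ℝ, 0 < δ₀ ∧ ∀ δ : ℝ, 0 < δ → δ < δ₀ →
      ∀ (E : Set (Euc d)) (𝒯 : Finset (Euc d × Euc d)),
        E ⊆ closedBall (0 : Euc d) 1 →
        MeasurableSet E →
        volume E ≤ ENNReal.ofReal (C * δ ^ ((d : ℝ) / 2 - ε)) →
        (∀ (a v : Euc d), v ≠ 0 → ∀ z : Euc d, ∀ ρ : ℝ, δ ≤ ρ → ρ ≤ 1 →
          volume (E ∩ Tube δ a v ∩ closedBall z ρ)
            ≤ ENNReal.ofReal (C * δ ^ ((d : ℝ) - 1 / 2 - ε) * ρ ^ ((1 : ℝ) / 2))) →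
        (∀ p ∈ 𝒯, p.2 ≠ 0) →
        (∀ p ∈ 𝒯, ∀ q ∈ 𝒯, p ≠ q →
          δ ≤ hausdorffDist (lineThrough p.1 p.2 ∩ closedBall (0 : Euc d) 2)
                (lineThrough q.1 q.2 ∩ closedBall (0 : Euc d) 2)) →
        (∀ p ∈ 𝒯, ENNReal.ofReal (δ ^ ((d : ℝ) - 1 / 2 + ε))
          ≤ volume (Tube δ p.1 p.2 ∩ E)) →
        ∀ x : Euc d,
          (({p ∈ (𝒯 : Set (Euc d × Euc d)) | x ∈ Tube δ p.1 p.2}.ncard : ℝ))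
            ≤ δ ^ (-(((d : ℝ) - 1) / 2) - K * ε) := by
  classical
  have hC0 : (0:ℝ) < C := by linarith
  have hdR : (2:ℝ) ≤ (d:ℝ) := by exact_mod_cast hd
  refine ⟨8 * (d:ℝ) + 4, by linarith, 1/8, by norm_num, ?_⟩
  intro ε hε hε8
  set A₁ : ℝ := (641 * 4 * C^2)^(2*d) with hA₁
  have hA₁pos : 0 < A₁ := by positivity
  set A₀ : ℝ := 2*C*A₁ + 1 with hA₀
  have hA₀pos : 0 < A₀ := by positivity
  have h1m : 0 < 1 - 4*ε := by linarith
  have h2ε : (0:ℝ) < 2*ε := by linarith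
  refine ⟨min (min ((1/(16*C^2)) ^ ((1:ℝ)/(1-4*ε))) ((1/A₀) ^ ((1:ℝ)/(2*ε)))) (1/2),
    by positivity, ?_⟩
  intro δ hδ hδlt
  intro E 𝒯 hE1 hEmeas hEvol hFrost hvne hsep hmass x
  have hδhalf : δ < 1/2 := lt_of_lt_of_le hδlt (min_le_right _ _)
  have hδ1 : δ < 1 := by linarith
  have hδa' : δ < (1/(16*C^2)) ^ ((1:ℝ)/(1-4*ε)) :=
    lt_of_lt_of_le hδlt (le_trans (min_le_left _ _) (min_le_left _ _))
  have hδb' : δ < (1/A₀) ^ ((1:ℝ)/(2*ε)) :=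
    lt_of_lt_of_le hδlt (le_trans (min_le_left _ _) (min_le_right _ _))
  have hpow1 : δ ^ (1 - 4*ε) ≤ 1/(16*C^2) := by
    have h := Real.rpow_lt_rpow hδ.le hδa' h1m
    rw [← Real.rpow_mul (by positivity), one_div_mul_cancel h1m.ne', Real.rpow_one] at h
    exact h.le
  have hpow2 : δ ^ (2*ε) ≤ 1/A₀ := by
    have h := Real.rpow_lt_rpow hδ.le hδb' h2ε
    rw [← Real.rpow_mul (by positivity), one_div_mul_cancel h2ε.ne', Real.rpow_one] at h
    exact h.le
  -- the intermediate scale ρ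
  set t : ℝ := δ ^ (2*ε) / (2*C) with ht
  have hδ2ε0 : 0 < δ ^ (2*ε) := Real.rpow_pos_of_pos hδ _
  have ht0 : 0 < t := by rw [ht]; positivity
  set ρ : ℝ := t^2 with hρdef
  have hρ0 : 0 < ρ := by rw [hρdef]; positivity
  have hδ2ε1 : δ ^ (2*ε) ≤ 1 := Real.rpow_le_one hδ.le hδ1.le h2ε.le
  have ht1 : t ≤ 1/2 := by
    rw [ht, div_le_iff₀ (by positivity)]
    nlinarith
  have hρ1 : ρ ≤ 1 := by rw [hρdef]; nlinarith
  have hsq : (δ ^ (2*ε))^(2:ℕ) = δ ^ (4*ε) := by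
    rw [← Real.rpow_natCast (δ ^ (2*ε)) 2, ← Real.rpow_mul hδ.le]
    norm_num
    ring_nf
  have hρeq : ρ = δ ^ (4*ε) / (4*C^2) := by
    rw [hρdef, ht, div_pow, hsq]
    congr 1
    ring
  have h4δρ : 4 * δ ≤ ρ := by
    have e1 : δ = δ ^ (1 - 4*ε) * δ ^ (4*ε) := by
      rw [← Real.rpow_add hδ]
      norm_num
    have hp4 : 0 < δ ^ (4*ε) := Real.rpow_pos_of_pos hδ _
    have h2 : δ ^ (1 - 4*ε) * δ ^ (4*ε) ≤ (1/(16*C^2)) * δ ^ (4*ε) :=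
      mul_le_mul_of_nonneg_right hpow1 hp4.le
    have h3 : 4 * ((1/(16*C^2)) * δ ^ (4*ε)) = δ ^ (4*ε) / (4*C^2) := by
      field_simp
      ring
    rw [hρeq]
    nlinarith [h2, h3, e1]
  have hδρ : δ ≤ ρ := by linarith
  have hρhalf : ρ ^ ((1:ℝ)/2) = t := by
    rw [hρdef, ← Real.rpow_natCast t 2, ← Real.rpow_mul ht0.le]
    norm_num
  have hkeyeq : C * δ ^ ((d:ℝ) - 1/2 - ε) * ρ ^ ((1:ℝ)/2) = δ ^ ((d:ℝ) - 1/2 + ε) / 2 := by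
    rw [hρhalf, ht]
    rw [show (d:ℝ) - 1/2 + ε = ((d:ℝ) - 1/2 - ε) + 2*ε by ring, Real.rpow_add hδ]
    field_simp
  -- the bush
  set S := 𝒯.filter (fun p : Euc d × Euc d => x ∈ Tube δ p.1 p.2) with hSdef
  have hset : {p ∈ (𝒯 : Set (Euc d × Euc d)) | x ∈ Tube δ p.1 p.2} = (S : Set _) := by
    rw [hSdef, Finset.coe_filter]
    ext p
    simp
  rw [hset, Set.ncard_coe_finset]
  set A : Euc d × Euc d → Set (Euc d) := fun p => (Tube δ p.1 p.2 ∩ E) \ closedBall x ρ with hA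
  have hAmeas : ∀ p : Euc d × Euc d, MeasurableSet (A p) := fun p =>
    ((tube_measurable δ p.1 p.2).inter hEmeas).diff measurableSet_closedBall
  -- Step 2: lower bound for each tube
  have hlow : ∀ p ∈ S, ENNReal.ofReal (δ ^ ((d:ℝ) - 1/2 + ε) / 2) ≤ volume (A p) := by
    intro p hp
    rw [hSdef, Finset.mem_filter] at hp
    obtain ⟨hpT, hpx⟩ := hp
    have hsplit : Tube δ p.1 p.2 ∩ E ⊆ (E ∩ Tube δ p.1 p.2 ∩ closedBall x ρ) ∪ A p := by
      intro z hz
      by_cases hzb : z ∈ closedBall x ρ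
      · exact Or.inl ⟨⟨hz.2, hz.1⟩, hzb⟩
      · exact Or.inr ⟨hz, hzb⟩
    have h1 := hmass p hpT
    have h2 := hFrost p.1 p.2 (hvne p hpT) x ρ hδρ hρ1
    have h3 : volume (Tube δ p.1 p.2 ∩ E)
        ≤ volume (E ∩ Tube δ p.1 p.2 ∩ closedBall x ρ) + volume (A p) :=
      le_trans (measure_mono hsplit) (measure_union_le _ _)
    have h4 : ENNReal.ofReal (δ ^ ((d:ℝ) - 1/2 + ε))
        ≤ ENNReal.ofReal (δ ^ ((d:ℝ) - 1/2 + ε) / 2) + volume (A p) := by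
      refine le_trans (le_trans h1 h3) (add_le_add_left ?_ _)
      refine le_trans h2 ?_
      rw [hkeyeq]
    have h5 := tsub_le_iff_left.2 h4
    rw [← ENNReal.ofReal_sub _ (by positivity)] at h5
    rw [show δ ^ ((d:ℝ) - 1/2 + ε) - δ ^ ((d:ℝ) - 1/2 + ε)/2
        = δ ^ ((d:ℝ) - 1/2 + ε)/2 by ring] at h5
    exact h5
  -- Step 3/4: overlap bound
  set N : ℝ≥0∞ := ENNReal.ofReal ((640/ρ + 1)^(2*d)) with hN
  have hsum : (S.card : ℝ≥0∞) * ENNReal.ofReal (δ ^ ((d:ℝ) - 1/2 + ε) / 2)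
      ≤ N * volume E := by
    have hcard : S.card • ENNReal.ofReal (δ ^ ((d:ℝ) - 1/2 + ε)/2) ≤ ∑ p ∈ S, volume (A p) :=
      Finset.card_nsmul_le_sum S _ _ hlow
    rw [nsmul_eq_mul] at hcard
    refine le_trans hcard ?_
    have e1 : ∑ p ∈ S, volume (A p)
        = ∫⁻ y, ∑ p ∈ S, (A p).indicator (fun _ => (1:ℝ≥0∞)) y := by
      rw [lintegral_finset_sum S (fun p _ => measurable_const.indicator (hAmeas p))]
      exact Finset.sum_congr rfl fun p _ => (lintegral_indicator_one (hAmeas p)).symm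
    have hpt : ∀ y : Euc d, ∑ p ∈ S, (A p).indicator (fun _ => (1:ℝ≥0∞)) y
        ≤ N * E.indicator (fun _ => (1:ℝ≥0∞)) y := by
      intro y
      by_cases hyE : y ∈ E
      · by_cases hyB : y ∈ closedBall x ρ
        · have hz : ∀ p ∈ S, (A p).indicator (fun _ => (1:ℝ≥0∞)) y = 0 := by
            intro p _
            exact Set.indicator_of_notMem (fun hyA => hyA.2 hyB) _
          rw [Finset.sum_congr rfl hz, Finset.sum_const, smul_zero]
          exact bot_le
        · have hcount : ∑ p ∈ S, (A p).indicator (fun _ => (1:ℝ≥0∞)) y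
              = ((S.filter (fun p => y ∈ A p)).card : ℝ≥0∞) := by
            rw [Finset.card_filter, Nat.cast_sum]
            refine Finset.sum_congr rfl fun p _ => ?_
            rw [Set.indicator_apply]
            by_cases h : y ∈ A p <;> simp [h]
          have hsub : S.filter (fun p => y ∈ A p)
              ⊆ 𝒯.filter (fun p : Euc d × Euc d => x ∈ Tube δ p.1 p.2 ∧ y ∈ Tube δ p.1 p.2) := by
            intro p hp
            rw [Finset.mem_filter] at hp
            obtain ⟨hpS, hyA⟩ := hp
            rw [hSdef, Finset.mem_filter] at hpS
            rw [Finset.mem_filter]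
            exact ⟨hpS.1, hpS.2, hyA.1.1⟩
          have hdist : ρ ≤ dist y x := by
            rw [mem_closedBall] at hyB
            push_neg at hyB
            linarith
          have hoc := overlap_count hd δ ρ x y 𝒯 hδ hρ1 h4δρ (hE1 hyE) hdist hvne hsep
          have hc2 : ((S.filter (fun p => y ∈ A p)).card : ℝ)
              ≤ (640/ρ + 1)^(2*d) := by
            refine le_trans ?_ hoc
            exact_mod_cast Finset.card_le_card hsub
          rw [hcount, Set.indicator_of_mem hyE, mul_one, hN]
          calc ((S.filter (fun p => y ∈ A p)).card : ℝ≥0∞)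
              = ENNReal.ofReal (((S.filter (fun p => y ∈ A p)).card : ℝ)) := by
                rw [ENNReal.ofReal_natCast]
            _ ≤ ENNReal.ofReal ((640/ρ + 1)^(2*d)) := ENNReal.ofReal_le_ofReal hc2
      · have hz : ∀ p ∈ S, (A p).indicator (fun _ => (1:ℝ≥0∞)) y = 0 := by
          intro p _
          exact Set.indicator_of_notMem (fun hyA => hyE hyA.1.2) _
        rw [Finset.sum_congr rfl hz, Finset.sum_const, smul_zero]
        exact bot_le
    rw [e1]
    calc ∫⁻ y, ∑ p ∈ S, (A p).indicator (fun _ => (1:ℝ≥0∞)) y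
        ≤ ∫⁻ y, N * E.indicator (fun _ => (1:ℝ≥0∞)) y := lintegral_mono hpt
      _ = N * volume E := by
          rw [lintegral_const_mul' _ _ ENNReal.ofReal_ne_top]
          have h := lintegral_indicator_one (μ := volume) hEmeas
          rw [show ∫⁻ (a : Euc d), E.indicator (fun _ => (1:ℝ≥0∞)) a = volume E from h]
  -- Step 5: to real numbers
  have hfinal1 : (S.card : ℝ≥0∞) * ENNReal.ofReal (δ ^ ((d:ℝ) - 1/2 + ε) / 2)
      ≤ N * ENNReal.ofReal (C * δ ^ ((d:ℝ)/2 - ε)) :=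
    le_trans hsum (mul_le_mul_right hEvol N)
  have hreal : (S.card : ℝ) * (δ ^ ((d:ℝ) - 1/2 + ε) / 2)
      ≤ (640/ρ + 1)^(2*d) * (C * δ ^ ((d:ℝ)/2 - ε)) := by
    rw [hN, ← ENNReal.ofReal_natCast S.card, ← ENNReal.ofReal_mul (by positivity),
      ← ENNReal.ofReal_mul (by positivity)] at hfinal1
    exact (ENNReal.ofReal_le_ofReal_iff (by positivity)).1 hfinal1
  -- Step 6: real arithmetic
  have hBpos : (0:ℝ) < 640/ρ + 1 := by positivity
  have hinv1 : (1:ℝ) ≤ 1/ρ := by rw [le_div_iff₀ hρ0]; linarith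
  have h640 : 640/ρ + 1 ≤ 641 * 4 * C^2 * δ ^ (-(4*ε)) := by
    have hinvρ : 1/ρ = 4*C^2 * δ ^ (-(4*ε)) := by
      rw [hρeq, Real.rpow_neg hδ.le]
      field_simp
    have e : 640/ρ + 1/ρ = 641 * (1/ρ) := by ring
    have : 640/ρ + 1 ≤ 640/ρ + 1/ρ := by linarith
    rw [e, hinvρ] at this
    calc 640/ρ + 1 ≤ 641 * (4*C^2 * δ ^ (-(4*ε))) := this
      _ = 641 * 4 * C^2 * δ ^ (-(4*ε)) := by ring
  have hpowd : (δ ^ (-(4*ε)))^(2*d) = δ ^ (-(8*(d:ℝ)*ε)) := by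
    rw [← Real.rpow_natCast (δ ^ (-(4*ε))) (2*d), ← Real.rpow_mul hδ.le]
    congr 1
    push_cast
    ring
  have hB : (640/ρ + 1)^(2*d) ≤ A₁ * δ ^ (-(8*(d:ℝ)*ε)) := by
    calc (640/ρ + 1)^(2*d) ≤ (641 * 4 * C^2 * δ ^ (-(4*ε)))^(2*d) :=
          pow_le_pow_left₀ hBpos.le h640 _
      _ = (641 * 4 * C^2)^(2*d) * (δ ^ (-(4*ε)))^(2*d) := mul_pow _ _ _
      _ = A₁ * δ ^ (-(8*(d:ℝ)*ε)) := by rw [hpowd, hA₁]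
  set M : ℝ := (S.card : ℝ) with hM
  have hM0 : 0 ≤ M := Nat.cast_nonneg _
  have hδx : 0 < δ ^ ((d:ℝ) - 1/2 + ε) := Real.rpow_pos_of_pos hδ _
  have h6 : M * (δ ^ ((d:ℝ) - 1/2 + ε) / 2)
      ≤ A₁ * δ ^ (-(8*(d:ℝ)*ε)) * (C * δ ^ ((d:ℝ)/2 - ε)) := by
    refine le_trans hreal (mul_le_mul_of_nonneg_right hB (by positivity))
  have h7 : M ≤ (A₁ * δ ^ (-(8*(d:ℝ)*ε)) * (C * δ ^ ((d:ℝ)/2 - ε))) * 2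
      / δ ^ ((d:ℝ) - 1/2 + ε) := by
    rw [le_div_iff₀ hδx]
    nlinarith [h6, hδx]
  have h8 : (A₁ * δ ^ (-(8*(d:ℝ)*ε)) * (C * δ ^ ((d:ℝ)/2 - ε))) * 2
      / δ ^ ((d:ℝ) - 1/2 + ε)
      = (2*C*A₁) * (δ ^ (-(8*(d:ℝ)*ε)) * δ ^ ((d:ℝ)/2 - ε) * (δ ^ ((d:ℝ) - 1/2 + ε))⁻¹) := by
    rw [div_eq_mul_inv]
    ring
  have hcomb : δ ^ (-(8*(d:ℝ)*ε)) * δ ^ ((d:ℝ)/2 - ε) * (δ ^ ((d:ℝ) - 1/2 + ε))⁻¹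
      = δ ^ (2*ε) * δ ^ (-(((d:ℝ)-1)/2) - (8*(d:ℝ)+4)*ε) := by
    rw [← Real.rpow_neg hδ.le, ← Real.rpow_add hδ, ← Real.rpow_add hδ, ← Real.rpow_add hδ]
    congr 1
    ring
  have hτpos : 0 < δ ^ (-(((d:ℝ)-1)/2) - (8*(d:ℝ)+4)*ε) := Real.rpow_pos_of_pos hδ _
  have h10 : (2*C*A₁) * δ ^ (2*ε) ≤ 1 := by
    have h11 : (2*C*A₁) * δ ^ (2*ε) ≤ (2*C*A₁) * (1/A₀) :=
      mul_le_mul_of_nonneg_left hpow2 (by positivity)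
    have h12 : (2*C*A₁) * (1/A₀) ≤ 1 := by
      rw [hA₀]
      rw [mul_one_div, div_le_one (by positivity)]
      linarith
    linarith
  calc M ≤ (A₁ * δ ^ (-(8*(d:ℝ)*ε)) * (C * δ ^ ((d:ℝ)/2 - ε))) * 2
        / δ ^ ((d:ℝ) - 1/2 + ε) := h7
    _ = (2*C*A₁) * (δ ^ (2*ε) * δ ^ (-(((d:ℝ)-1)/2) - (8*(d:ℝ)+4)*ε)) := by
        rw [h8, hcomb]
    _ = ((2*C*A₁) * δ ^ (2*ε)) * δ ^ (-(((d:ℝ)-1)/2) - (8*(d:ℝ)+4)*ε) := by ring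
    _ ≤ 1 * δ ^ (-(((d:ℝ)-1)/2) - (8*(d:ℝ)+4)*ε) :=
        mul_le_mul_of_nonneg_right h10 hτpos.le
    _ = δ ^ (-(((d:ℝ)-1)/2) - (8*(d:ℝ)+4)*ε) := one_mul _

end
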